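/- Let g ∈ ℤ, A > 0, k ≥ 2 an integer, and let K : M → ℝ be an integrable function on a finite measure space (M,μ) of total measure A, satisfying K ≤ 1 pointwise and ∫_M K dμ = 4π(1 - g). If g ≥ 1, then (1/A)·∫_M (2 - 2K)^k dμ ≥ 2^k, with equality iff g = 1 and K = 0 almost everywhere. -/

import Mathlib

open MeasureTheory

theorem sigma_k_lower_bound_dim2 {M : Type*} [MeasurableSpace M]
    (μ : Measure M) [IsFiniteMeasure μ]
    (A : ℝ) (hA : (μ Set.univ).toReal = A) (hApos : 0 < A)
    (g : ℤ) (k : ℕ) (hk : 2 ≤ k)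
    (K : M → ℝ) (hK1 : Integrable K μ) (hKle : ∀ x, K x ≤ 1)
    (hKint : Integrable (fun x => (2 - 2 * K x) ^ k) μ)
    (hGB : ∫ x, K x ∂μ = 4 * Real.pi * (1 - g))
    (hg : 1 ≤ g) :
    (1 / A) * ∫ x, (2 - 2 * K x) ^ k ∂μ ≥ 2 ^ k ∧
    ((1 / A) * ∫ x, (2 - 2 * K x) ^ k ∂μ = 2 ^ k ↔
      g = 1 ∧ K =ᵐ[μ] 0) := by
  have hpi := Real.pi_pos
  have hgR : (1 : ℝ) ≤ (g : ℝ) := by exact_mod_cast hg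
  set f : M → ℝ := fun x => 2 - 2 * K x with hf
  have hfi : Integrable f μ := (integrable_const (2:ℝ)).sub (hK1.const_mul 2)
  have hfnn : ∀ x, f x ∈ Set.Ici (0:ℝ) := by
    intro x
    have := hKle x
    simp only [hf, Set.mem_Ici]
    linarith
  have hintf : ∫ x, f x ∂μ = 2 * A + 8 * Real.pi * ((g:ℝ) - 1) := by
    have : ∫ x, f x ∂μ = (∫ _x, (2:ℝ) ∂μ) - ∫ x, 2 * K x ∂μ :=
      integral_sub (integrable_const _) (hK1.const_mul 2)
    rw [this, integral_const, smul_eq_mul, integral_const_mul, hGB, measureReal_def, hA]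
    ring
  have havg : ⨍ x, f x ∂μ = (1 / A) * (2 * A + 8 * Real.pi * ((g:ℝ) - 1)) := by
    rw [average_eq, hintf, measureReal_def, hA, smul_eq_mul, one_div]
  have hc2 : 2 ≤ ⨍ x, f x ∂μ := by
    have h8 : 0 ≤ 8 * Real.pi * ((g:ℝ) - 1) :=
      mul_nonneg (by positivity) (by linarith)
    rw [havg, one_div_mul_eq_div, le_div_iff₀ hApos]
    linarith
  have hconv : StrictConvexOn ℝ (Set.Ici (0:ℝ)) (fun x : ℝ => x ^ k) :=
    strictConvexOn_pow hk
  have hcont : ContinuousOn (fun x : ℝ => x ^ k) (Set.Ici 0) :=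
    (continuous_pow k).continuousOn
  have hgi : Integrable ((fun x : ℝ => x ^ k) ∘ f) μ := hKint
  have hEq2 : (g = 1 ∧ K =ᵐ[μ] 0) →
      (1 / A) * ∫ x, (2 - 2 * K x) ^ k ∂μ = 2 ^ k := by
    rintro ⟨hg1, hK0⟩
    have : ∫ x, (2 - 2 * K x) ^ k ∂μ = ∫ _x, (2:ℝ) ^ k ∂μ := by
      refine integral_congr_ae ?_
      filter_upwards [hK0] with x hx
      simp [hx]
    rw [this, integral_const, measureReal_def, hA, smul_eq_mul, one_div]
    field_simp
  rcases hconv.ae_eq_const_or_map_average_lt hcont isClosed_Ici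
      (Filter.Eventually.of_forall hfnn) hfi hgi with hconst | hlt
  · -- f is a.e. constant equal to c := ⨍ f
    set c := ⨍ x, f x ∂μ with hc
    have hintfk : ∫ x, (2 - 2 * K x) ^ k ∂μ = c ^ k * A := by
      have : ∫ x, (2 - 2 * K x) ^ k ∂μ = ∫ _x, c ^ k ∂μ := by
        refine integral_congr_ae ?_
        filter_upwards [hconst] with x hx
        simp only [Function.const] at hx
        simp [hf] at hx ⊢
        rw [hx]
      rw [this, integral_const, measureReal_def, hA, smul_eq_mul, mul_comm]
    have hval : (1 / A) * ∫ x, (2 - 2 * K x) ^ k ∂μ = c ^ k := by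
      rw [hintfk]; field_simp
    have hck : (2:ℝ) ^ k ≤ c ^ k := pow_le_pow_left₀ (by norm_num : (0:ℝ) ≤ 2) hc2 k
    constructor
    · rw [hval]; exact hck
    · constructor
      · intro heq
        rw [hval] at heq
        have hceq : c = 2 := by
          have hmono := pow_left_strictMonoOn₀ (M₀ := ℝ) (n := k) (by omega : k ≠ 0)
          exact hmono.injOn (by linarith : (0:ℝ) ≤ c)
            (by norm_num : (0:ℝ) ≤ 2) heq
        have hg1 : g = 1 := by
          rw [hceq] at havg
          have hA' : A ≠ 0 := ne_of_gt hApos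
          have h0 : 8 * Real.pi * ((g:ℝ) - 1) = 0 := by
            field_simp at havg
            linarith
          have hg0 : (g:ℝ) - 1 = 0 := by
            have hpne : (8:ℝ) * Real.pi ≠ 0 := by positivity
            exact (mul_eq_zero.mp h0).resolve_left hpne
          have : (g:ℝ) = 1 := by linarith
          exact_mod_cast this
        refine ⟨hg1, ?_⟩
        filter_upwards [hconst] with x hx
        simp only [Function.const] at hx
        simp only [hf] at hx
        rw [hceq] at hx
        simp only [Pi.zero_apply]
        linarith
      · exact hEq2
  · -- strict case
    have havgk : ⨍ x, (2 - 2 * K x) ^ k ∂μ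
        = (1 / A) * ∫ x, (2 - 2 * K x) ^ k ∂μ := by
      rw [average_eq, measureReal_def, hA, smul_eq_mul, one_div]
    have hlt' : (2:ℝ) ^ k < (1 / A) * ∫ x, (2 - 2 * K x) ^ k ∂μ := by
      have hck : (2:ℝ) ^ k ≤ (⨍ x, f x ∂μ) ^ k := pow_le_pow_left₀ (by norm_num : (0:ℝ) ≤ 2) hc2 k
      calc (2:ℝ) ^ k ≤ (⨍ x, f x ∂μ) ^ k := hck
        _ < ⨍ x, (fun y : ℝ => y ^ k) (f x) ∂μ := hlt
        _ = (1 / A) * ∫ x, (2 - 2 * K x) ^ k ∂μ := havgk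
    refine ⟨le_of_lt hlt', ⟨fun h => absurd h (ne_of_gt hlt'), fun h => ?_⟩⟩
    exact absurd (hEq2 h) (ne_of_gt hlt')
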